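/- arXiv:1304.6343 — 4 statements merged into one kernel-verified Lean document; each statement's English description precedes it below -/
import Mathlib

section
/- In a commutative Q-algebra, suppose elements x_0,...,x_4 (indices mod 5) satisfy x_i · x_{i+1} = 0 and (x_i + x_{i+2} - x_{i+1}) · x_k = 0 for all k ∈ {i, i-1, i+2, i+3}. Then also (x_i + x_{i+2} - x_{i+1})(x_{i-3} + x_{i-1} - x_{i-2}) = 0 for all i, i.e., the 'diagonal-diagonal' relations are consequences of the 'side-side' and 'side-diagonal' relations. -/
/-- In a commutative ℚ-algebra, if `x_i x_{i+1} = 0` and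
`(x_i + x_{i+2} - x_{i+1}) x_k = 0` for `k ∈ {i, i-1, i+2, i+3}` (indices mod 5), then
`(x_i + x_{i+2} - x_{i+1})(x_{i-3} + x_{i-1} - x_{i-2}) = 0` for all `i`. -/
theorem stmt1 (A : Type*) [CommRing A] [Algebra ℚ A] (x : ZMod 5 → A)
    (h1 : ∀ i : ZMod 5, x i * x (i + 1) = 0)
    (h2 : ∀ i k : ZMod 5, (k = i ∨ k = i - 1 ∨ k = i + 2 ∨ k = i + 3) →
      (x i + x (i + 2) - x (i + 1)) * x k = 0) :
    ∀ i : ZMod 5,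
      (x i + x (i + 2) - x (i + 1)) * (x (i - 3) + x (i - 1) - x (i - 2)) = 0 := by
  intro i
  have e1 : i - 3 = i + 2 := by rw [show (3 : ZMod 5) = -2 by decide]; ring
  have e2 : i - 2 = i + 3 := by rw [show (2 : ZMod 5) = -3 by decide]; ring
  rw [e1, e2]
  linear_combination h2 i (i + 2) (Or.inr (Or.inr (Or.inl rfl))) +
    h2 i (i - 1) (Or.inr (Or.inl rfl)) - h2 i (i + 3) (Or.inr (Or.inr (Or.inr rfl)))
end

section
/- Let A be the graded commutative Q-algebra generated in degree 1 by x_0,...,x_4 (indices mod 5) subject to the quadratic relations x_i x_{i+1} = 0 and (x_i + x_{i+2} - x_{i+1}) x_k = 0 for k ∈ {i, i-1, i+2, i+3}. Then the degree-2 component A_2 is one-dimensional over Q, spanned by x_0^2. -/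
open MvPolynomial

/-- The quadratic Keel relations for `M̄_{0,5}` in the side variables `x_i`, `i ∈ ℤ/5ℤ`. -/
noncomputable def keelRels5 : Set (MvPolynomial (ZMod 5) ℚ) :=
  {p | ∃ i : ZMod 5, p = X i * X (i + 1)} ∪
  {p | ∃ i k : ZMod 5, (k = i ∨ k = i - 1 ∨ k = i + 2 ∨ k = i + 3) ∧
      p = (X i + X (i + 2) - X (i + 1)) * X k}

noncomputable def keelIdeal5 : Ideal (MvPolynomial (ZMod 5) ℚ) := Ideal.span keelRels5

/-- The degree-`n` graded component of `A = ℚ[x_0,…,x_4]/I`. -/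
noncomputable def keelComp5 (n : ℕ) :
    Submodule ℚ (MvPolynomial (ZMod 5) ℚ ⧸ keelIdeal5) :=
  (MvPolynomial.homogeneousSubmodule (ZMod 5) ℚ n).map
    (Ideal.Quotient.mkₐ ℚ keelIdeal5).toLinearMap

namespace KeelAux

open Finsupp

lemma pair_eq_sq (a b c : ZMod 5) :
    single a 1 + single b 1 = single c 2 ↔ a = c ∧ b = c := by
  constructor
  · intro h
    have hc := DFunLike.congr_fun h c
    simp [single_apply] at hc
    by_cases hac : a = c <;> by_cases hbc : b = c <;> simp [hac, hbc] at hc ⊢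
  · rintro ⟨rfl, rfl⟩
    rw [← Finsupp.single_add]

lemma pair_eq_pair (a b c d : ZMod 5) :
    single a 1 + single b 1 = single c 1 + single d 1 ↔
      (a = c ∧ b = d) ∨ (a = d ∧ b = c) := by
  constructor
  · intro h
    by_cases hac : a = c
    · subst hac
      exact Or.inl ⟨rfl, (Finsupp.single_left_injective one_ne_zero) (add_left_cancel h)⟩
    · right
      have hc := DFunLike.congr_fun h c
      have hd := DFunLike.congr_fun h d
      simp [single_apply] at hc hd
      by_cases hbc : b = c <;> by_cases had : a = d <;>
        simp [hac, hbc, had] at hc hd ⊢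
      all_goals by_cases hcd : c = d <;> simp [hcd] at hc hd ⊢ <;> omega
  · rintro (⟨rfl, rfl⟩ | ⟨rfl, rfl⟩)
    · rfl
    · exact add_comm _ _

noncomputable def phi (p : MvPolynomial (ZMod 5) ℚ) : ℚ :=
  ∑ j : ZMod 5, (coeff (single j 1 + single (j + 2) 1) p - coeff (single j 2) p)

lemma sum5 (f : ZMod 5 → ℚ) : ∑ j : ZMod 5, f j = f 0 + f 1 + f 2 + f 3 + f 4 :=
  Fin.sum_univ_five f

lemma phi_add (p q : MvPolynomial (ZMod 5) ℚ) : phi (p + q) = phi p + phi q := by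
  simp [phi, coeff_add, Finset.sum_add_distrib]; ring

lemma degree_pair (a b : ZMod 5) : (single a 1 + single b 1 : ZMod 5 →₀ ℕ).degree = 2 := by
  have h : ∀ (x y : ZMod 5 →₀ ℕ), (x + y).degree = x.degree + y.degree := by
    simp [Finsupp.degree_eq_weight_one]
  rw [h]
  simp [Finsupp.degree_apply, Finsupp.support_single_ne_zero _ (one_ne_zero (α := ℕ))]

lemma degree_sq (a : ZMod 5) : (single a (2:ℕ)).degree = 2 := by
  simp [Finsupp.degree_apply, Finsupp.support_single_ne_zero a (by norm_num : (2:ℕ) ≠ 0)]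

lemma rels_homog {r : MvPolynomial (ZMod 5) ℚ} (hr : r ∈ keelRels5) : r.IsHomogeneous 2 := by
  have hx : ∀ i : ZMod 5, (X i : MvPolynomial (ZMod 5) ℚ).IsHomogeneous 1 :=
    fun i => isHomogeneous_X _ _
  rcases hr with ⟨i, rfl⟩ | ⟨i, k, _, rfl⟩
  · exact (hx i).mul (hx (i+1))
  · exact (((hx i).add (hx (i+2))).sub (hx (i+1))).mul (hx k)

lemma coeff_mul_homog {r q : MvPolynomial (ZMod 5) ℚ} (hr : r.IsHomogeneous 2)
    {m : ZMod 5 →₀ ℕ} (hm : m.degree = 2) :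
    coeff m (q * r) = coeff 0 q * coeff m r := by
  rw [coeff_mul]
  refine Finset.sum_eq_single_of_mem (0, m) (by simp) ?_
  rintro ⟨a, b⟩ hab hne
  simp only [Finset.HasAntidiagonal.mem_antidiagonal] at hab
  rcases eq_or_ne a 0 with rfl | ha
  · simp at hab; simp [hab] at hne
  · have hda : 1 ≤ a.degree := by
      rcases Nat.eq_zero_or_pos a.degree with h | h
      · exact absurd ((Finsupp.degree_eq_zero_iff a).mp h) ha
      · exact h
    have hsum : a.degree + b.degree = 2 := by
      rw [← hm, ← hab]
      simp [Finsupp.degree_eq_weight_one]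
    have : b.degree ≠ 2 := by omega
    rw [hr.coeff_eq_zero this, mul_zero]

lemma phi_mul_rel {r : MvPolynomial (ZMod 5) ℚ} (hr : r.IsHomogeneous 2)
    (q : MvPolynomial (ZMod 5) ℚ) : phi (q * r) = coeff 0 q * phi r := by
  unfold phi
  rw [Finset.mul_sum]
  refine Finset.sum_congr rfl fun j _ => ?_
  rw [coeff_mul_homog hr (degree_pair j (j+2)), coeff_mul_homog hr (degree_sq j)]
  ring

lemma zmod5_cases : ∀ i : ZMod 5, i = 0 ∨ i = 1 ∨ i = 2 ∨ i = 3 ∨ i = 4 := by decide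

lemma phi_rels {r : MvPolynomial (ZMod 5) ℚ} (hr : r ∈ keelRels5) : phi r = 0 := by
  rcases hr with ⟨i, rfl⟩ | ⟨i, k, hk, rfl⟩
  · rcases zmod5_cases i with rfl|rfl|rfl|rfl|rfl <;>
    · rw [phi, sum5]
      simp only [X, monomial_mul, add_mul, sub_mul, coeff_add, coeff_sub, coeff_monomial,
        mul_one, one_mul, pair_eq_sq, pair_eq_pair]
      simp (config := { decide := true })
  · rcases zmod5_cases i with rfl|rfl|rfl|rfl|rfl <;>
      rcases hk with rfl | rfl | rfl | rfl <;>
    · rw [phi, sum5]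
      simp only [X, monomial_mul, add_mul, sub_mul, coeff_add, coeff_sub, coeff_monomial,
        mul_one, one_mul, pair_eq_sq, pair_eq_pair]
      simp (config := { decide := true })

lemma phi_ideal {p : MvPolynomial (ZMod 5) ℚ} (hp : p ∈ keelIdeal5) : phi p = 0 := by
  have key : ∀ q, phi (q * p) = 0 := by
    refine Submodule.span_induction ?_ ?_ ?_ ?_ hp
    · intro r hr q
      rw [phi_mul_rel (rels_homog hr), phi_rels hr, mul_zero]
    · intro q; rw [mul_zero]; simp [phi]
    · intro x y _ _ hx hy q
      rw [mul_add, phi_add, hx, hy, add_zero]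
    · intro a x _ hx q
      rw [smul_eq_mul, ← mul_assoc]
      exact hx (q * a)
  simpa using key 1

lemma phi_X0sq : phi ((X 0 : MvPolynomial (ZMod 5) ℚ) ^ 2) = -1 := by
  rw [sq, phi, sum5]
  simp only [X, monomial_mul, coeff_monomial, mul_one, pair_eq_sq, pair_eq_pair]
  simp (config := { decide := true })

lemma X0sq_not_mem : (X 0 : MvPolynomial (ZMod 5) ℚ) ^ 2 ∉ keelIdeal5 := by
  intro h
  have := phi_ideal h
  rw [phi_X0sq] at this
  norm_num at this

lemma deg2_decomp (d : ZMod 5 →₀ ℕ) (h : d.degree = 2) :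
    ∃ i j : ZMod 5, d = single i 1 + single j 1 := by
  have hcard : Multiset.card d.toMultiset = 2 := by
    rw [Finsupp.card_toMultiset]
    simpa [Finsupp.degree_apply, Finsupp.sum] using h
  obtain ⟨i, j, hij⟩ := Multiset.card_eq_two.mp hcard
  refine ⟨i, j, ?_⟩
  have h2 : Finsupp.toMultiset (single i 1 + single j 1 : ZMod 5 →₀ ℕ) = {i, j} := by
    rw [toMultiset_add, toMultiset_single, toMultiset_single]
    simp [Multiset.insert_eq_cons]
  have := congrArg Multiset.toFinsupp (hij.trans h2.symm)
  rwa [Finsupp.toMultiset_toFinsupp, Finsupp.toMultiset_toFinsupp] at this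

noncomputable abbrev qmk : MvPolynomial (ZMod 5) ℚ →+* MvPolynomial (ZMod 5) ℚ ⧸ keelIdeal5 :=
  Ideal.Quotient.mk keelIdeal5

noncomputable abbrev S : Submodule ℚ (MvPolynomial (ZMod 5) ℚ ⧸ keelIdeal5) :=
  Submodule.span ℚ {qmk (X 0 ^ 2)}

lemma mem_g (i : ZMod 5) : (X i * X (i+1) : MvPolynomial (ZMod 5) ℚ) ∈ keelIdeal5 :=
  Ideal.subset_span (Or.inl ⟨i, rfl⟩)

lemma mem_h (i k : ZMod 5) (hk : k = i ∨ k = i - 1 ∨ k = i + 2 ∨ k = i + 3) :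
    ((X i + X (i + 2) - X (i + 1)) * X k : MvPolynomial (ZMod 5) ℚ) ∈ keelIdeal5 :=
  Ideal.subset_span (Or.inr ⟨i, k, hk, rfl⟩)

lemma sq_step (i : ZMod 5) : qmk (X i ^ 2) = qmk (X (i+2) ^ 2) := by
  rw [Ideal.Quotient.mk_eq_mk_iff_sub_mem]
  have h1 := mem_h i i (Or.inl rfl)
  have h2 := mem_h i (i+2) (Or.inr (Or.inr (Or.inl rfl)))
  have g1 := mem_g i
  have g2 := mem_g (i+1)
  rw [show ((i+1)+1 : ZMod 5) = i + 2 by ring] at g2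
  have hring : (X i : MvPolynomial (ZMod 5) ℚ)^2 - X (i+2)^2 =
      ((X i + X (i+2) - X (i+1)) * X i) - ((X i + X (i+2) - X (i+1)) * X (i+2))
        + X i * X (i+1) - X (i+1) * X (i+2) := by ring
  rw [hring]
  exact Ideal.sub_mem _ (Ideal.add_mem _ (Ideal.sub_mem _ h1 h2) g1) g2

lemma dist2_eq (i : ZMod 5) : qmk (X i * X (i+2)) = - qmk (X i ^ 2) := by
  rw [eq_neg_iff_add_eq_zero, ← map_add, Ideal.Quotient.eq_zero_iff_mem]
  have h1 := mem_h i i (Or.inl rfl)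
  have g1 := mem_g i
  have hring : (X i : MvPolynomial (ZMod 5) ℚ) * X (i+2) + X i ^ 2 =
      (X i + X (i+2) - X (i+1)) * X i + X i * X (i+1) := by ring
  rw [hring]
  exact Ideal.add_mem _ h1 g1

lemma sq_all (i : ZMod 5) : qmk (X i ^ 2) = qmk (X 0 ^ 2) := by
  have e0 := sq_step 0
  have e2 := sq_step 2
  have e4 := sq_step 4
  have e1 := sq_step 1
  rw [show ((0:ZMod 5)+2) = 2 by decide] at e0
  rw [show ((2:ZMod 5)+2) = 4 by decide] at e2
  rw [show ((4:ZMod 5)+2) = 1 by decide] at e4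
  rw [show ((1:ZMod 5)+2) = 3 by decide] at e1
  rcases zmod5_cases i with rfl|rfl|rfl|rfl|rfl
  · rfl
  · exact (e0.trans (e2.trans e4)).symm
  · exact e0.symm
  · exact (e0.trans (e2.trans (e4.trans e1))).symm
  · exact (e0.trans e2).symm

lemma sqS (i : ZMod 5) : qmk (X i * X i) ∈ S := by
  rw [← sq, sq_all]
  exact Submodule.mem_span_singleton_self _

lemma adjS (i : ZMod 5) : qmk (X i * X (i+1)) ∈ S := by
  rw [Ideal.Quotient.eq_zero_iff_mem.mpr (mem_g i)]
  exact zero_mem _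

lemma d2S (i : ZMod 5) : qmk (X i * X (i+2)) ∈ S := by
  rw [dist2_eq, sq_all]
  exact neg_mem (Submodule.mem_span_singleton_self _)

lemma monoS (i j : ZMod 5) : qmk (X i * X j) ∈ S := by
  obtain ⟨d, rfl⟩ : ∃ d, j = i + d := ⟨j - i, by ring⟩
  rcases zmod5_cases d with rfl|rfl|rfl|rfl|rfl
  · rw [add_zero]; exact sqS i
  · exact adjS i
  · exact d2S i
  · have h := d2S (i+3)
    rw [show (i+3)+2 = i by rw [add_assoc, show ((3:ZMod 5)+2) = 0 by decide, add_zero]] at h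
    rwa [mul_comm]
  · have h := adjS (i+4)
    rw [show (i+4)+1 = i by rw [add_assoc, show ((4:ZMod 5)+1) = 0 by decide, add_zero]] at h
    rwa [mul_comm]

end KeelAux

/-- the degree-2 component `A_2` is one-dimensional, spanned by `x_0²`. -/
theorem stmt3 :
    Module.finrank ℚ (keelComp5 2) = 1 ∧
    keelComp5 2 = Submodule.span ℚ {Ideal.Quotient.mk keelIdeal5 (X 0 ^ 2)} := by
  have hspan : keelComp5 2 = Submodule.span ℚ {Ideal.Quotient.mk keelIdeal5 (X 0 ^ 2)} := by
    apply le_antisymm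
    · unfold keelComp5
      rw [homogeneousSubmodule_eq_finsupp_supported, AddMonoidAlgebra.supported_eq_span_single,
        Submodule.map_span, Submodule.span_le]
      rintro x ⟨p, ⟨d, hd, rfl⟩, rfl⟩
      obtain ⟨i, j, rfl⟩ := KeelAux.deg2_decomp d hd
      have hXX : (AddMonoidAlgebra.single (Finsupp.single i 1 + Finsupp.single j 1) (1:ℚ) :
          MvPolynomial (ZMod 5) ℚ) = X i * X j := by
        rw [X, X, monomial_mul, one_mul]
        rfl
      simp only [AlgHom.toLinearMap_apply, Ideal.Quotient.mkₐ_eq_mk, hXX]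
      exact KeelAux.monoS i j
    · rw [Submodule.span_le, Set.singleton_subset_iff]
      exact ⟨X 0 ^ 2, by simpa using MvPolynomial.isHomogeneous_X_pow (R := ℚ) (0 : ZMod 5) 2,
        by simp [Ideal.Quotient.mkₐ_eq_mk]⟩
  refine ⟨?_, hspan⟩
  rw [hspan]
  apply finrank_span_singleton
  intro h
  exact KeelAux.X0sq_not_mem (Ideal.Quotient.eq_zero_iff_mem.mp h)
end

section
/- Let A be the graded commutative Q-algebra on generators x_0,...,x_4 (indices mod 5) with relations x_i x_{i+1} = 0 and (x_i + x_{i+2} - x_{i+1}) x_k = 0 for k ∈ {i, i-1, i+2, i+3}. Then A_3 = 0, i.e., every product of three generators vanishes in A. -/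
open MvPolynomial

/-- Abstract ring computation: the Keel relations kill all triple products. -/
lemma keel_ring_key {R : Type*} [CommRing R] (a : ZMod 5 → R)
    (h1 : ∀ i, a i * a (i + 1) = 0)
    (h2 : ∀ i k, (k = i ∨ k = i - 1 ∨ k = i + 2 ∨ k = i + 3) →
      (a i + a (i + 2) - a (i + 1)) * a k = 0) :
    ∀ i j k, a i * a j * a k = 0 := by
  have R1_0 : a 0 * a 1 = 0 := by
    simpa only [show ((0:ZMod 5)+1) = 1 by decide] using h1 0
  have R1_1 : a 1 * a 2 = 0 := by
    simpa only [show ((1:ZMod 5)+1) = 2 by decide] using h1 1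
  have R1_2 : a 2 * a 3 = 0 := by
    simpa only [show ((2:ZMod 5)+1) = 3 by decide] using h1 2
  have R1_3 : a 3 * a 4 = 0 := by
    simpa only [show ((3:ZMod 5)+1) = 4 by decide] using h1 3
  have R1_4 : a 4 * a 0 = 0 := by
    simpa only [show ((4:ZMod 5)+1) = 0 by decide] using h1 4
  have R2_0_0 : (a 0 + a 2 - a 1) * a 0 = 0 := by
    simpa only [show ((0:ZMod 5)+2) = 2 by decide, show ((0:ZMod 5)+1) = 1 by decide] using h2 0 0 (by decide)
  have R2_0_4 : (a 0 + a 2 - a 1) * a 4 = 0 := by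
    simpa only [show ((0:ZMod 5)+2) = 2 by decide, show ((0:ZMod 5)+1) = 1 by decide] using h2 0 4 (by decide)
  have R2_0_2 : (a 0 + a 2 - a 1) * a 2 = 0 := by
    simpa only [show ((0:ZMod 5)+2) = 2 by decide, show ((0:ZMod 5)+1) = 1 by decide] using h2 0 2 (by decide)
  have R2_0_3 : (a 0 + a 2 - a 1) * a 3 = 0 := by
    simpa only [show ((0:ZMod 5)+2) = 2 by decide, show ((0:ZMod 5)+1) = 1 by decide] using h2 0 3 (by decide)
  have R2_1_1 : (a 1 + a 3 - a 2) * a 1 = 0 := by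
    simpa only [show ((1:ZMod 5)+2) = 3 by decide, show ((1:ZMod 5)+1) = 2 by decide] using h2 1 1 (by decide)
  have R2_1_0 : (a 1 + a 3 - a 2) * a 0 = 0 := by
    simpa only [show ((1:ZMod 5)+2) = 3 by decide, show ((1:ZMod 5)+1) = 2 by decide] using h2 1 0 (by decide)
  have R2_1_3 : (a 1 + a 3 - a 2) * a 3 = 0 := by
    simpa only [show ((1:ZMod 5)+2) = 3 by decide, show ((1:ZMod 5)+1) = 2 by decide] using h2 1 3 (by decide)
  have R2_1_4 : (a 1 + a 3 - a 2) * a 4 = 0 := by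
    simpa only [show ((1:ZMod 5)+2) = 3 by decide, show ((1:ZMod 5)+1) = 2 by decide] using h2 1 4 (by decide)
  have R2_2_2 : (a 2 + a 4 - a 3) * a 2 = 0 := by
    simpa only [show ((2:ZMod 5)+2) = 4 by decide, show ((2:ZMod 5)+1) = 3 by decide] using h2 2 2 (by decide)
  have R2_2_1 : (a 2 + a 4 - a 3) * a 1 = 0 := by
    simpa only [show ((2:ZMod 5)+2) = 4 by decide, show ((2:ZMod 5)+1) = 3 by decide] using h2 2 1 (by decide)
  have R2_2_4 : (a 2 + a 4 - a 3) * a 4 = 0 := by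
    simpa only [show ((2:ZMod 5)+2) = 4 by decide, show ((2:ZMod 5)+1) = 3 by decide] using h2 2 4 (by decide)
  have R2_2_0 : (a 2 + a 4 - a 3) * a 0 = 0 := by
    simpa only [show ((2:ZMod 5)+2) = 4 by decide, show ((2:ZMod 5)+1) = 3 by decide] using h2 2 0 (by decide)
  have R2_3_3 : (a 3 + a 0 - a 4) * a 3 = 0 := by
    simpa only [show ((3:ZMod 5)+2) = 0 by decide, show ((3:ZMod 5)+1) = 4 by decide] using h2 3 3 (by decide)
  have R2_3_2 : (a 3 + a 0 - a 4) * a 2 = 0 := by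
    simpa only [show ((3:ZMod 5)+2) = 0 by decide, show ((3:ZMod 5)+1) = 4 by decide] using h2 3 2 (by decide)
  have R2_3_0 : (a 3 + a 0 - a 4) * a 0 = 0 := by
    simpa only [show ((3:ZMod 5)+2) = 0 by decide, show ((3:ZMod 5)+1) = 4 by decide] using h2 3 0 (by decide)
  have R2_3_1 : (a 3 + a 0 - a 4) * a 1 = 0 := by
    simpa only [show ((3:ZMod 5)+2) = 0 by decide, show ((3:ZMod 5)+1) = 4 by decide] using h2 3 1 (by decide)
  have R2_4_4 : (a 4 + a 1 - a 0) * a 4 = 0 := by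
    simpa only [show ((4:ZMod 5)+2) = 1 by decide, show ((4:ZMod 5)+1) = 0 by decide] using h2 4 4 (by decide)
  have R2_4_3 : (a 4 + a 1 - a 0) * a 3 = 0 := by
    simpa only [show ((4:ZMod 5)+2) = 1 by decide, show ((4:ZMod 5)+1) = 0 by decide] using h2 4 3 (by decide)
  have R2_4_1 : (a 4 + a 1 - a 0) * a 1 = 0 := by
    simpa only [show ((4:ZMod 5)+2) = 1 by decide, show ((4:ZMod 5)+1) = 0 by decide] using h2 4 1 (by decide)
  have R2_4_2 : (a 4 + a 1 - a 0) * a 2 = 0 := by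
    simpa only [show ((4:ZMod 5)+2) = 1 by decide, show ((4:ZMod 5)+1) = 0 by decide] using h2 4 2 (by decide)
  have N_0_0 : a 0 * a 0 = (-1) * (a 0 * a 2) := by linear_combination (1) * R1_0 + (1) * R2_0_0
  have N_0_1 : a 0 * a 1 = (0) * (a 0 * a 2) := by linear_combination (1) * R1_0
  have N_0_2 : a 0 * a 2 = (1) * (a 0 * a 2) := by linear_combination 
  have N_0_3 : a 0 * a 3 = (1) * (a 0 * a 2) := by linear_combination (-1) * R1_0 + (1) * R2_1_0
  have N_0_4 : a 0 * a 4 = (0) * (a 0 * a 2) := by linear_combination (1) * R1_4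
  have N_1_0 : a 1 * a 0 = (0) * (a 0 * a 2) := by linear_combination (1) * R1_0
  have N_1_1 : a 1 * a 1 = (-1) * (a 0 * a 2) := by linear_combination (1) * R1_0 + (1) * R1_1 + (-1) * R1_2 + (1) * R2_0_3 + (1) * R2_1_1 + (-1) * R2_1_0
  have N_1_2 : a 1 * a 2 = (0) * (a 0 * a 2) := by linear_combination (1) * R1_1
  have N_1_3 : a 1 * a 3 = (1) * (a 0 * a 2) := by linear_combination (-1) * R1_0 + (1) * R1_2 + (-1) * R2_0_3 + (1) * R2_1_0
  have N_1_4 : a 1 * a 4 = (1) * (a 0 * a 2) := by linear_combination (-1) * R1_1 + (1) * R1_2 + (1) * R1_4 + (-1) * R2_0_4 + (-1) * R2_0_2 + (1) * R2_2_2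
  have N_2_0 : a 2 * a 0 = (1) * (a 0 * a 2) := by linear_combination 
  have N_2_1 : a 2 * a 1 = (0) * (a 0 * a 2) := by linear_combination (1) * R1_1
  have N_2_2 : a 2 * a 2 = (-1) * (a 0 * a 2) := by linear_combination (1) * R1_1 + (1) * R2_0_2
  have N_2_3 : a 2 * a 3 = (0) * (a 0 * a 2) := by linear_combination (1) * R1_2
  have N_2_4 : a 2 * a 4 = (1) * (a 0 * a 2) := by linear_combination (-1) * R1_1 + (1) * R1_2 + (-1) * R2_0_2 + (1) * R2_2_2
  have N_3_0 : a 3 * a 0 = (1) * (a 0 * a 2) := by linear_combination (-1) * R1_0 + (1) * R2_1_0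
  have N_3_1 : a 3 * a 1 = (1) * (a 0 * a 2) := by linear_combination (-1) * R1_0 + (1) * R1_2 + (-1) * R2_0_3 + (1) * R2_1_0
  have N_3_2 : a 3 * a 2 = (0) * (a 0 * a 2) := by linear_combination (1) * R1_2
  have N_3_3 : a 3 * a 3 = (-1) * (a 0 * a 2) := by linear_combination (1) * R1_0 + (1) * R2_0_3 + (-1) * R2_1_0 + (1) * R2_1_3
  have N_3_4 : a 3 * a 4 = (0) * (a 0 * a 2) := by linear_combination (1) * R1_3
  have N_4_0 : a 4 * a 0 = (0) * (a 0 * a 2) := by linear_combination (1) * R1_4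
  have N_4_1 : a 4 * a 1 = (1) * (a 0 * a 2) := by linear_combination (-1) * R1_1 + (1) * R1_2 + (1) * R1_4 + (-1) * R2_0_4 + (-1) * R2_0_2 + (1) * R2_2_2
  have N_4_2 : a 4 * a 2 = (1) * (a 0 * a 2) := by linear_combination (-1) * R1_1 + (1) * R1_2 + (-1) * R2_0_2 + (1) * R2_2_2
  have N_4_3 : a 4 * a 3 = (0) * (a 0 * a 2) := by linear_combination (1) * R1_3
  have N_4_4 : a 4 * a 4 = (-1) * (a 0 * a 2) := by linear_combination (1) * R1_1 + (-1) * R1_2 + (1) * R1_3 + (1) * R2_0_2 + (-1) * R2_2_2 + (1) * R2_2_4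
  have Z_0 : a 0 * (a 0 * a 2) = 0 := by linear_combination (1) * a 0 * R1_0 + (1) * a 3 * R1_0 + (-1) * a 0 * R1_2 + (1) * a 3 * R2_0_0 + (-1) * a 0 * R2_1_0
  have Z_1 : a 1 * (a 0 * a 2) = 0 := by linear_combination (1) * a 2 * R1_0
  have Z_2 : a 2 * (a 0 * a 2) = 0 := by linear_combination (-1) * a 0 * R1_0 + (1) * a 2 * R1_0 + (-1) * a 3 * R1_0 + (1) * a 0 * R1_2 + (1) * a 2 * R2_0_0 + (-1) * a 3 * R2_0_0 + (1) * a 0 * R2_1_0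
  have Z_3 : a 3 * (a 0 * a 2) = 0 := by linear_combination (1) * a 0 * R1_2
  have Z_4 : a 4 * (a 0 * a 2) = 0 := by linear_combination (1) * a 2 * R1_4
  have hN : ∀ j k : ZMod 5, ∃ c : R, a j * a k = c * (a 0 * a 2) := by
    intro j k
    fin_cases j <;> fin_cases k <;> exact ⟨_, by assumption⟩
  have hZ : ∀ m : ZMod 5, a m * (a 0 * a 2) = 0 := by
    intro m; fin_cases m <;> assumption
  intro i j k
  obtain ⟨c, hc⟩ := hN j k
  linear_combination a i * hc + c * hZ i

lemma keel_key (i j k : ZMod 5) :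
    Ideal.Quotient.mk keelIdeal5 (X i * X j * X k) = 0 := by
  have h1 : ∀ i : ZMod 5,
      Ideal.Quotient.mk keelIdeal5 (X i) * Ideal.Quotient.mk keelIdeal5 (X (i + 1)) = 0 := by
    intro i
    have hm : (X i * X (i + 1) : MvPolynomial (ZMod 5) ℚ) ∈ keelIdeal5 :=
      Ideal.subset_span (Or.inl ⟨i, rfl⟩)
    rw [← map_mul]
    exact Ideal.Quotient.eq_zero_iff_mem.mpr hm
  have h2 : ∀ i k : ZMod 5, (k = i ∨ k = i - 1 ∨ k = i + 2 ∨ k = i + 3) →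
      (Ideal.Quotient.mk keelIdeal5 (X i) + Ideal.Quotient.mk keelIdeal5 (X (i + 2)) -
        Ideal.Quotient.mk keelIdeal5 (X (i + 1))) * Ideal.Quotient.mk keelIdeal5 (X k) = 0 := by
    intro i k h
    have hm : ((X i + X (i + 2) - X (i + 1)) * X k : MvPolynomial (ZMod 5) ℚ) ∈ keelIdeal5 :=
      Ideal.subset_span (Or.inr ⟨i, k, h, rfl⟩)
    have := Ideal.Quotient.eq_zero_iff_mem.mpr hm
    rw [map_mul, map_sub, map_add] at this
    exact this
  have := keel_ring_key (fun i => Ideal.Quotient.mk keelIdeal5 (X i)) h1 h2 i j k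
  rw [map_mul, map_mul]
  exact this

lemma keel_exists_single_add {d : ZMod 5 →₀ ℕ} {n : ℕ}
    (h : (d.sum fun _ e => e) = n + 1) :
    ∃ (i : ZMod 5) (e : ZMod 5 →₀ ℕ), (e.sum fun _ e => e) = n ∧ d = e + Finsupp.single i 1 := by
  have hd0 : d ≠ 0 := by rintro rfl; simp at h
  obtain ⟨i, hi⟩ : ∃ i, d i ≠ 0 := by
    by_contra hall
    push_neg at hall
    exact hd0 (Finsupp.ext hall)
  have hle : Finsupp.single i 1 ≤ d :=
    Finsupp.single_le_iff.mpr (Nat.one_le_iff_ne_zero.mpr hi)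
  have heq : d - Finsupp.single i 1 + Finsupp.single i 1 = d := tsub_add_cancel_of_le hle
  refine ⟨i, d - Finsupp.single i 1, ?_, heq.symm⟩
  have hsum : ((d - Finsupp.single i 1) + Finsupp.single i 1).sum (fun _ e => e) = n + 1 := by
    rw [heq]; exact h
  rw [Finsupp.sum_add_index' (fun _ => rfl) (fun _ _ _ => rfl),
    Finsupp.sum_single_index rfl] at hsum
  omega

lemma keel_hom3_mem (p : MvPolynomial (ZMod 5) ℚ) (hp : p.IsHomogeneous 3) :
    p ∈ keelIdeal5 := by
  have keyI : ∀ i j k : ZMod 5, (X i * X j * X k : MvPolynomial (ZMod 5) ℚ) ∈ keelIdeal5 :=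
    fun i j k => Ideal.Quotient.eq_zero_iff_mem.mp (keel_key i j k)
  rw [p.as_sum]
  refine Ideal.sum_mem _ fun d hd => ?_
  have hdeg : (d.sum fun _ e => e) = 3 := by
    have := hp (MvPolynomial.mem_support_iff.mp hd)
    rw [Finsupp.weight_apply] at this
    simpa [smul_eq_mul] using this
  obtain ⟨i, e, he, rfl⟩ := keel_exists_single_add hdeg
  obtain ⟨j, f, hf, rfl⟩ := keel_exists_single_add he
  obtain ⟨k, g, hg, rfl⟩ := keel_exists_single_add hf
  have hg0 : g = 0 := by
    ext x
    by_contra hx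
    have hxs : x ∈ g.support := Finsupp.mem_support_iff.mpr hx
    have := Finset.sum_eq_zero_iff.mp hg x hxs
    exact hx this
  subst hg0
  have hmon : ∀ c : ℚ,
      (monomial (0 + Finsupp.single k 1 + Finsupp.single j 1 + Finsupp.single i 1) c :
      MvPolynomial (ZMod 5) ℚ) = C c * (X k * X j * X i) := by
    intro c
    simp [MvPolynomial.X, monomial_mul, C_mul_monomial]
  rw [hmon]
  exact Ideal.mul_mem_left _ _ (keyI k j i)

/-- the degree-3 component `A_3` vanishes; equivalently every product of
three generators is zero in `A`. -/
theorem stmt4 :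
    keelComp5 3 = ⊥ ∧
    ∀ i j k : ZMod 5, Ideal.Quotient.mk keelIdeal5 (X i * X j * X k) = 0 := by
  refine ⟨?_, keel_key⟩
  rw [eq_bot_iff]
  rintro x hx
  rw [keelComp5] at hx
  obtain ⟨p, hp, rfl⟩ := Submodule.mem_map.mp hx
  have hpm : p ∈ keelIdeal5 :=
    keel_hom3_mem p (((MvPolynomial.mem_homogeneousSubmodule _ _).mp hp))
  simp only [AlgHom.toLinearMap_apply, Ideal.Quotient.mkₐ_eq_mk]
  rw [Submodule.mem_bot]
  exact Ideal.Quotient.eq_zero_iff_mem.mpr hpm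
end

section
/- The Hilbert series of the graded algebra A = H_*(M̄_{0,5}) in its Keel presentation on the five side variables is 1 + 5t + t^2; equivalently, dim_Q A_0 = 1, dim_Q A_1 = 5, dim_Q A_2 = 1, and A_n = 0 for n ≥ 3. -/
open MvPolynomial

namespace Keel5Aux

noncomputable def f : MvPolynomial (ZMod 5) ℚ →ₐ[ℚ] (MvPolynomial (ZMod 5) ℚ ⧸ keelIdeal5) :=
  Ideal.Quotient.mkₐ ℚ keelIdeal5

noncomputable def y (i : ZMod 5) : MvPolynomial (ZMod 5) ℚ ⧸ keelIdeal5 := f (X i)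

lemma f_eq_zero {p : MvPolynomial (ZMod 5) ℚ} (hp : p ∈ keelIdeal5) : f p = 0 := by
  show Ideal.Quotient.mkₐ ℚ keelIdeal5 p = 0
  rw [Ideal.Quotient.mkₐ_eq_mk]
  exact Ideal.Quotient.eq_zero_iff_mem.mpr hp

lemma mem_of_f_eq_zero {p : MvPolynomial (ZMod 5) ℚ} (hp : f p = 0) : p ∈ keelIdeal5 := by
  rw [show f p = Ideal.Quotient.mk keelIdeal5 p from congrFun (Ideal.Quotient.mkₐ_eq_mk ℚ keelIdeal5) p] at hp
  exact Ideal.Quotient.eq_zero_iff_mem.mp hp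

lemma rel1 (i : ZMod 5) : y i * y (i + 1) = 0 := by
  have h : (X i * X (i + 1) : MvPolynomial (ZMod 5) ℚ) ∈ keelIdeal5 :=
    Ideal.subset_span (Or.inl ⟨i, rfl⟩)
  rw [y, y, ← map_mul]
  exact f_eq_zero h

lemma rel2 (i k : ZMod 5) (h : k = i ∨ k = i - 1 ∨ k = i + 2 ∨ k = i + 3) :
    (y i + y (i + 2) - y (i + 1)) * y k = 0 := by
  have hm : ((X i + X (i + 2) - X (i + 1)) * X k : MvPolynomial (ZMod 5) ℚ) ∈ keelIdeal5 :=
    Ideal.subset_span (Or.inr ⟨i, k, h, rfl⟩)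
  have := f_eq_zero hm
  rw [map_mul, map_sub, map_add] at this
  exact this

lemma sq2 (i : ZMod 5) : y i * y i = -(y i * y (i + 2)) := by
  have h := rel2 i i (Or.inl rfl)
  have h1 := rel1 i
  linear_combination h + h1

lemma sq2' (i : ZMod 5) : y (i + 2) * y (i + 2) = -(y i * y (i + 2)) := by
  have h := rel2 i (i + 2) (Or.inr (Or.inr (Or.inl rfl)))
  have h1 := rel1 (i + 1)
  have e : i + 1 + 1 = i + 2 := by ring
  rw [e] at h1
  linear_combination h + h1

lemma sqs (i : ZMod 5) : y i * y i = y (i + 2) * y (i + 2) := by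
  rw [sq2, sq2']

lemma sqs' (i j : ZMod 5) (h : j = i + 2) : y i * y i = y j * y j := by
  rw [h]; exact sqs i

lemma cases5 : ∀ c : ZMod 5, c = 0 ∨ c = 1 ∨ c = 2 ∨ c = 3 ∨ c = 4 := by decide

lemma sq_eq (i : ZMod 5) : y i * y i = y 0 * y 0 := by
  have h02 := sqs' 0 2 (by decide)
  have h24 := sqs' 2 4 (by decide)
  have h41 := sqs' 4 1 (by decide)
  have h13 := sqs' 1 3 (by decide)
  rcases cases5 i with rfl | rfl | rfl | rfl | rfl
  · rfl
  · rw [← h41, ← h24, ← h02]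
  · rw [← h02]
  · rw [← h13, ← h41, ← h24, ← h02]
  · rw [← h24, ← h02]

lemma syc (c : ZMod 5) : (y 0 * y 0) * y c = 0 := by
  rw [← sq_eq (c + 1)]
  linear_combination y (c + 1) * rel1 c

lemma pair (a b : ZMod 5) : ∃ q : ℚ, y a * y b = q • (y 0 * y 0) := by
  have hb : b = a + (b - a) := by ring
  rcases cases5 (b - a) with h | h | h | h | h <;> rw [h] at hb
  · exact ⟨1, by rw [one_smul, show b = a by rw [hb, add_zero], sq_eq a]⟩
  · refine ⟨0, ?_⟩
    rw [zero_smul, hb, rel1 a]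
  · refine ⟨-1, ?_⟩
    rw [hb, neg_smul, one_smul, ← sq_eq a]
    linear_combination sq2 a
  · refine ⟨-1, ?_⟩
    have e : (a + 3) + 2 = a := by
      rw [add_assoc]
      norm_num
      decide
    have h1 := sq2 (a + 3)
    rw [e] at h1
    have h2 := sq_eq (a + 3)
    rw [hb, neg_smul, one_smul]
    linear_combination h1 - h2
  · refine ⟨0, ?_⟩
    have e : (a + 4) + 1 = a := by
      rw [add_assoc]
      norm_num
      decide
    have h1 := rel1 (a + 4)
    rw [e] at h1
    rw [hb, zero_smul]
    linear_combination h1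

lemma cubic (a b c : ZMod 5) : y a * y b * y c = 0 := by
  obtain ⟨q, hq⟩ := pair a b
  rw [hq, smul_mul_assoc, syc c, smul_zero]

/-! ### Degree bookkeeping for exponents -/

lemma deg_add (u v : ZMod 5 →₀ ℕ) : (u + v).degree = u.degree + v.degree := by
  simp [Finsupp.degree_eq_weight_one, map_add]

lemma deg_single (a : ZMod 5) (n : ℕ) : (Finsupp.single a n).degree = n := by
  simp [Finsupp.degree_eq_weight_one, Finsupp.weight_apply,
    Finsupp.sum_single_index]

lemma extract (d : ZMod 5 →₀ ℕ) (hd : d.degree ≠ 0) :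
    ∃ (a : ZMod 5) (d' : ZMod 5 →₀ ℕ), d = Finsupp.single a 1 + d' ∧
      d'.degree + 1 = d.degree := by
  have hne : d ≠ 0 := fun h => hd (by rw [h]; simp)
  obtain ⟨a, ha⟩ : ∃ a, d a ≠ 0 := by
    by_contra h
    push_neg at h
    exact hne (Finsupp.ext h)
  have hle : Finsupp.single a 1 ≤ d := by
    rw [Finsupp.single_le_iff]
    omega
  have hd' : d = Finsupp.single a 1 + (d - Finsupp.single a 1) :=
    (add_tsub_cancel_of_le hle).symm
  refine ⟨a, d - Finsupp.single a 1, hd', ?_⟩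
  conv_rhs => rw [hd']
  rw [deg_add, deg_single]
  omega

lemma monomial_split (a : ZMod 5) (d' : ZMod 5 →₀ ℕ) :
    (monomial (Finsupp.single a 1 + d') (1 : ℚ)) = X a * monomial d' 1 := by
  rw [show (X a : MvPolynomial (ZMod 5) ℚ) = monomial (Finsupp.single a 1) 1 from rfl,
    monomial_mul, one_mul]

lemma mdeg1 (d : ZMod 5 →₀ ℕ) (h : d.degree = 1) :
    ∃ a, (monomial d (1 : ℚ) : MvPolynomial (ZMod 5) ℚ) = X a := by
  obtain ⟨a, d', rfl, hdeg⟩ := extract d (by omega)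
  have : d'.degree = 0 := by omega
  rw [(Finsupp.degree_eq_zero_iff d').mp this, add_zero]
  exact ⟨a, rfl⟩

lemma mdeg2 (d : ZMod 5 →₀ ℕ) (h : d.degree = 2) :
    ∃ a b, (monomial d (1 : ℚ) : MvPolynomial (ZMod 5) ℚ) = X a * X b := by
  obtain ⟨a, d', rfl, hdeg⟩ := extract d (by omega)
  have h1 : d'.degree = 1 := by omega
  obtain ⟨b, hb⟩ := mdeg1 d' h1
  exact ⟨a, b, by rw [monomial_split, hb]⟩

lemma fmon3 : ∀ (n : ℕ) (d : ZMod 5 →₀ ℕ), d.degree = n + 3 →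
    f (monomial d 1) = 0 := by
  intro n
  induction n with
  | zero =>
    intro d hd
    obtain ⟨a, d', rfl, hdeg⟩ := extract d (by omega)
    have h2 : d'.degree = 2 := by omega
    obtain ⟨b, c, hbc⟩ := mdeg2 d' h2
    rw [monomial_split, hbc, map_mul, map_mul, ← mul_assoc]
    exact cubic a b c
  | succ n ih =>
    intro d hd
    obtain ⟨a, d', rfl, hdeg⟩ := extract d (by omega)
    rw [monomial_split, map_mul, ih d' (by omega), mul_zero]

lemma f_eq_sum (p : MvPolynomial (ZMod 5) ℚ) :
    f p = ∑ d ∈ p.support, coeff d p • f (monomial d 1) := by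
  conv_lhs => rw [← p.support_sum_monomial_coeff]
  rw [map_sum]
  refine Finset.sum_congr rfl fun d _ => ?_
  rw [show (monomial d (coeff d p) : MvPolynomial (ZMod 5) ℚ)
      = coeff d p • monomial d 1 by rw [smul_monomial, smul_eq_mul, mul_one],
    map_smul]

lemma deg_of_mem_support {p : MvPolynomial (ZMod 5) ℚ} {n : ℕ}
    (hp : p.IsHomogeneous n) {d : ZMod 5 →₀ ℕ} (hd : d ∈ p.support) :
    d.degree = n := by
  by_contra h
  exact (mem_support_iff.mp hd) (hp.coeff_eq_zero h)

def nu (i j : ZMod 5) : ℤ :=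
  (if i = j then 1 else 0) - (if j = i + 2 then 1 else 0) - (if i = j + 2 then 1 else 0)

lemma nu_id : ∀ i k : ZMod 5, (k = i ∨ k = i - 1 ∨ k = i + 2 ∨ k = i + 3) →
    nu i k + nu (i + 2) k - nu (i + 1) k = 0 := by decide

noncomputable def lfun (p : MvPolynomial (ZMod 5) ℚ) : ℚ :=
  ∑ a : ZMod 5, (coeff (Finsupp.single a 2) p
    - coeff (Finsupp.single a 1 + Finsupp.single (a + 2) 1) p)

lemma E2 (a b i j : ZMod 5) :
    Finsupp.single a 1 + Finsupp.single b 1 = Finsupp.single i 1 + Finsupp.single j 1 ↔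
      (a = i ∧ b = j) ∨ (a = j ∧ b = i) := by
  rw [Finsupp.single_add_single_eq_single_add_single (one_ne_zero) (one_ne_zero)]
  norm_num

lemma E1 (a i j : ZMod 5) :
    Finsupp.single a 2 = Finsupp.single i 1 + Finsupp.single j 1 ↔ (a = i ∧ i = j) := by
  rw [show (2:ℕ) = 1 + 1 from rfl, Finsupp.single_add, E2]
  constructor
  · rintro (⟨rfl, rfl⟩ | ⟨rfl, rfl⟩) <;> exact ⟨rfl, rfl⟩
  · rintro ⟨rfl, rfl⟩; exact Or.inl ⟨rfl, rfl⟩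

lemma coeff_XX (i j : ZMod 5) (D : ZMod 5 →₀ ℕ) :
    coeff D (X i * X j : MvPolynomial (ZMod 5) ℚ) =
      if Finsupp.single i 1 + Finsupp.single j 1 = D then 1 else 0 := by
  rw [show (X i * X j : MvPolynomial (ZMod 5) ℚ)
      = monomial (Finsupp.single i 1 + Finsupp.single j 1) 1 by
        rw [show (X i : MvPolynomial (ZMod 5) ℚ) = monomial (Finsupp.single i 1) 1 from rfl,
          show (X j : MvPolynomial (ZMod 5) ℚ) = monomial (Finsupp.single j 1) 1 from rfl,
          monomial_mul, one_mul],
    coeff_monomial]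

lemma zne2 : ∀ z : ZMod 5, ¬ (z = z + 2) := by decide
lemma zne2' : ∀ z : ZMod 5, ¬ (z + 2 = z) := by decide
lemma zne4 : ∀ z : ZMod 5, ¬ (z = z + 2 + 2) := by decide

lemma lXX (i j : ZMod 5) : lfun (X i * X j) = (nu i j : ℚ) := by
  unfold lfun nu
  have key1 : ∀ a : ZMod 5, coeff (Finsupp.single a 2) (X i * X j : MvPolynomial (ZMod 5) ℚ)
      = if a = i ∧ i = j then 1 else 0 := by
    intro a
    rw [coeff_XX]
    exact if_congr (by rw [eq_comm, E1]) rfl rfl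
  have key2 : ∀ a : ZMod 5,
      coeff (Finsupp.single a 1 + Finsupp.single (a + 2) 1) (X i * X j : MvPolynomial (ZMod 5) ℚ)
      = if (a = i ∧ j = i + 2) ∨ (a = j ∧ i = j + 2) then 1 else 0 := by
    intro a
    rw [coeff_XX]
    refine if_congr ?_ rfl rfl
    rw [E2]
    constructor
    · rintro (⟨rfl, rfl⟩ | ⟨rfl, rfl⟩)
      · exact Or.inl ⟨rfl, rfl⟩
      · exact Or.inr ⟨rfl, rfl⟩
    · rintro (⟨rfl, rfl⟩ | ⟨rfl, rfl⟩)
      · exact Or.inl ⟨rfl, rfl⟩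
      · exact Or.inr ⟨rfl, rfl⟩
  have h20 : (2 : ZMod 5) ≠ 0 := by decide
  simp only [key1, key2]
  by_cases h1 : i = j
  · subst h1
    simp [zne2, h20, Finset.sum_ite_eq']
  · by_cases h2 : j = i + 2
    · subst h2
      simp [h1, h20, zne2, zne2', zne4, Finset.sum_ite_eq', Finset.sum_sub_distrib]
    · by_cases h3 : i = j + 2
      · subst h3
        simp [h1, h2, h20, zne2, zne2', zne4, Finset.sum_ite_eq', Finset.sum_sub_distrib]
      · simp [h1, h2, h3]

lemma lfun_add (p q : MvPolynomial (ZMod 5) ℚ) : lfun (p + q) = lfun p + lfun q := by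
  simp only [lfun, coeff_add]
  rw [← Finset.sum_add_distrib]
  exact Finset.sum_congr rfl fun a _ => by ring

lemma lfun_sub (p q : MvPolynomial (ZMod 5) ℚ) : lfun (p - q) = lfun p - lfun q := by
  simp only [lfun, coeff_sub]
  rw [← Finset.sum_sub_distrib]
  exact Finset.sum_congr rfl fun a _ => by ring

lemma coeff_mul_low' {p q : MvPolynomial (ZMod 5) ℚ} (hp : coeff 0 p = 0)
    (hq : coeff 0 q = 0) (d : ZMod 5 →₀ ℕ) (hd : d.degree ≤ 1) :
    coeff d (p * q) = 0 := by
  rw [coeff_mul]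
  refine Finset.sum_eq_zero ?_
  rintro ⟨u, v⟩ h
  have hm : u + v = d := Finset.HasAntidiagonal.mem_antidiagonal.mp h
  have hdeg : u.degree + v.degree ≤ 1 := by rw [← deg_add, hm]; exact hd
  rcases (by omega : u.degree = 0 ∨ v.degree = 0) with h0 | h0
  · rw [(Finsupp.degree_eq_zero_iff u).mp h0, hp, zero_mul]
  · rw [(Finsupp.degree_eq_zero_iff v).mp h0, hq, mul_zero]

lemma coeff_mul_low2 {p : MvPolynomial (ZMod 5) ℚ}
    (hp : ∀ d : ZMod 5 →₀ ℕ, d.degree ≤ 1 → coeff d p = 0)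
    (q : MvPolynomial (ZMod 5) ℚ) (d : ZMod 5 →₀ ℕ) (hd : d.degree ≤ 1) :
    coeff d (q * p) = 0 := by
  rw [coeff_mul]
  refine Finset.sum_eq_zero ?_
  rintro ⟨u, v⟩ h
  have hm : u + v = d := Finset.HasAntidiagonal.mem_antidiagonal.mp h
  have hdeg : u.degree + v.degree ≤ 1 := by rw [← deg_add, hm]; exact hd
  rw [hp v (by omega), mul_zero]

lemma coeff_mul_two {p : MvPolynomial (ZMod 5) ℚ}
    (hp : ∀ d : ZMod 5 →₀ ℕ, d.degree ≤ 1 → coeff d p = 0)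
    (q : MvPolynomial (ZMod 5) ℚ) (D : ZMod 5 →₀ ℕ) (hD : D.degree = 2) :
    coeff D (q * p) = coeff 0 q * coeff D p := by
  rw [coeff_mul]
  rw [Finset.sum_eq_single_of_mem ((0 : ZMod 5 →₀ ℕ), D)
    (Finset.HasAntidiagonal.mem_antidiagonal.mpr (zero_add D))]
  rintro ⟨u, v⟩ h hne
  have hm : u + v = D := Finset.HasAntidiagonal.mem_antidiagonal.mp h
  by_cases hu : u = 0
  · exact absurd (by rw [hu] at hm ⊢; rw [← hm, zero_add]) hne
  · have h1 : 1 ≤ u.degree := Nat.one_le_iff_ne_zero.mpr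
      (fun h0 => hu ((Finsupp.degree_eq_zero_iff u).mp h0))
    have : u.degree + v.degree = 2 := by rw [← deg_add, hm, hD]
    rw [hp v (by omega), mul_zero]

lemma lfun_mul {p : MvPolynomial (ZMod 5) ℚ}
    (hp : ∀ d : ZMod 5 →₀ ℕ, d.degree ≤ 1 → coeff d p = 0)
    (q : MvPolynomial (ZMod 5) ℚ) : lfun (q * p) = coeff 0 q * lfun p := by
  simp only [lfun, Finset.mul_sum]
  refine Finset.sum_congr rfl fun a _ => ?_
  rw [coeff_mul_two hp q _ (by rw [deg_single]),
    coeff_mul_two hp q _ (by rw [deg_add, deg_single, deg_single])]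
  ring

lemma nu1 : ∀ i : ZMod 5, nu i (i + 1) = 0 := by decide

lemma inv {p : MvPolynomial (ZMod 5) ℚ} (hp : p ∈ keelIdeal5) :
    (∀ d : ZMod 5 →₀ ℕ, d.degree ≤ 1 → coeff d p = 0) ∧ lfun p = 0 := by
  refine Submodule.span_induction
    (p := fun x _ => (∀ d : ZMod 5 →₀ ℕ, d.degree ≤ 1 → coeff d x = 0) ∧ lfun x = 0)
    ?_ ?_ ?_ ?_ hp
  · rintro g (⟨i, rfl⟩ | ⟨i, k, hk, rfl⟩)
    · refine ⟨coeff_mul_low' (coeff_zero_X i) (coeff_zero_X (i + 1)), ?_⟩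
      rw [lXX]
      exact_mod_cast nu1 i
    · refine ⟨coeff_mul_low' (by simp) (coeff_zero_X k), ?_⟩
      rw [show (X i + X (i + 2) - X (i + 1)) * X k
          = X i * X k + X (i + 2) * X k - (X (i + 1) * X k :
            MvPolynomial (ZMod 5) ℚ) by ring,
        lfun_sub, lfun_add, lXX, lXX, lXX]
      exact_mod_cast nu_id i k hk
  · exact ⟨fun d _ => by simp, by simp [lfun]⟩
  · rintro x z hx hz ⟨hx1, hx2⟩ ⟨hz1, hz2⟩
    exact ⟨fun d hd => by rw [coeff_add, hx1 d hd, hz1 d hd, add_zero],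
      by rw [lfun_add, hx2, hz2, add_zero]⟩
  · rintro a x hx ⟨hx1, hx2⟩
    rw [smul_eq_mul]
    exact ⟨coeff_mul_low2 hx1 a, by rw [lfun_mul hx1, hx2, mul_zero]⟩

lemma one_notin : (1 : MvPolynomial (ZMod 5) ℚ) ∉ keelIdeal5 := by
  intro h
  have := (inv h).1 0 (by simp)
  simp at this

lemma sq_notin : (X 0 * X 0 : MvPolynomial (ZMod 5) ℚ) ∉ keelIdeal5 := by
  intro h
  have := (inv h).2
  rw [lXX] at this
  rw [show nu 0 0 = 1 by decide] at this
  norm_num at this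

lemma one_ne : (1 : MvPolynomial (ZMod 5) ℚ ⧸ keelIdeal5) ≠ 0 := by
  intro h
  exact one_notin (mem_of_f_eq_zero (by rw [map_one]; exact h))

lemma s_ne : (y 0 * y 0 : MvPolynomial (ZMod 5) ℚ ⧸ keelIdeal5) ≠ 0 := by
  intro h
  exact sq_notin (mem_of_f_eq_zero (by rw [map_mul]; exact h))

lemma comp0 : keelComp5 0
    = Submodule.span ℚ {(1 : MvPolynomial (ZMod 5) ℚ ⧸ keelIdeal5)} := by
  apply le_antisymm
  · rintro x ⟨p, hp, rfl⟩
    show f p ∈ _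
    rw [f_eq_sum]
    refine Submodule.sum_mem _ fun d hd => ?_
    have h0 : d = 0 := (Finsupp.degree_eq_zero_iff d).mp
      (deg_of_mem_support ((mem_homogeneousSubmodule 0 p).mp hp) hd)
    subst h0
    rw [monomial_zero', C_1, map_one]
    exact Submodule.smul_mem _ _ (Submodule.mem_span_singleton_self 1)
  · rw [Submodule.span_le, Set.singleton_subset_iff]
    exact ⟨1, (mem_homogeneousSubmodule 0 1).mpr (isHomogeneous_one _ _), map_one f⟩

lemma comp1 : keelComp5 1 = Submodule.span ℚ (Set.range y) := by
  apply le_antisymm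
  · rintro x ⟨p, hp, rfl⟩
    show f p ∈ _
    rw [f_eq_sum]
    refine Submodule.sum_mem _ fun d hd => ?_
    have h1 : d.degree = 1 := deg_of_mem_support ((mem_homogeneousSubmodule 1 p).mp hp) hd
    obtain ⟨a, ha⟩ := mdeg1 d h1
    rw [ha]
    exact Submodule.smul_mem _ _ (Submodule.subset_span ⟨a, rfl⟩)
  · rw [Submodule.span_le]
    rintro _ ⟨a, rfl⟩
    exact ⟨X a, (mem_homogeneousSubmodule 1 _).mpr (isHomogeneous_X _ a), rfl⟩

lemma linind : LinearIndependent ℚ y := by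
  rw [Fintype.linearIndependent_iff]
  intro g hg i
  have hf : f (∑ j : ZMod 5, g j • X j) = 0 := by
    rw [map_sum]
    simpa only [map_smul, y] using hg
  have hco := (inv (mem_of_f_eq_zero hf)).1 (Finsupp.single i 1) (by rw [deg_single])
  rw [coeff_sum] at hco
  simp only [coeff_smul, coeff_X', smul_eq_mul, mul_ite, mul_one, mul_zero,
    Finsupp.single_left_inj (one_ne_zero (α := ℕ)), Finset.sum_ite_eq',
    Finset.mem_univ, if_true] at hco
  exact hco

lemma comp2 : keelComp5 2 = Submodule.span ℚ {(y 0 * y 0 :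
    MvPolynomial (ZMod 5) ℚ ⧸ keelIdeal5)} := by
  apply le_antisymm
  · rintro x ⟨p, hp, rfl⟩
    show f p ∈ _
    rw [f_eq_sum]
    refine Submodule.sum_mem _ fun d hd => ?_
    have h2 : d.degree = 2 := deg_of_mem_support ((mem_homogeneousSubmodule 2 p).mp hp) hd
    obtain ⟨a, b, hab⟩ := mdeg2 d h2
    obtain ⟨q, hq⟩ := pair a b
    rw [hab, map_mul, show f (X a) * f (X b) = q • (y 0 * y 0) from hq]
    exact Submodule.smul_mem _ _
      (Submodule.smul_mem _ _ (Submodule.mem_span_singleton_self _))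
  · rw [Submodule.span_le, Set.singleton_subset_iff]
    refine ⟨X 0 * X 0, (mem_homogeneousSubmodule 2 _).mpr
      (by simpa using (isHomogeneous_X ℚ (0 : ZMod 5)).mul (isHomogeneous_X ℚ 0)), ?_⟩
    show f (X 0 * X 0) = y 0 * y 0
    rw [map_mul]
    rfl

lemma compN (n : ℕ) (hn : 3 ≤ n) : keelComp5 n = ⊥ := by
  rw [eq_bot_iff]
  rintro x ⟨p, hp, rfl⟩
  show f p ∈ (⊥ : Submodule ℚ _)
  rw [Submodule.mem_bot, f_eq_sum]
  refine Finset.sum_eq_zero fun d hd => ?_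
  have hdeg : d.degree = n := deg_of_mem_support ((mem_homogeneousSubmodule n p).mp hp) hd
  rw [fmon3 (n - 3) d (by omega), smul_zero]

end Keel5Aux

/-- the Hilbert series of `A = H_*(M̄_{0,5})` on the five side variables is
`1 + 5t + t²`: `dim A_0 = 1`, `dim A_1 = 5`, `dim A_2 = 1`, and `A_n = 0` for `n ≥ 3`. -/
theorem stmt5 :
    Module.finrank ℚ (keelComp5 0) = 1 ∧
    Module.finrank ℚ (keelComp5 1) = 5 ∧
    Module.finrank ℚ (keelComp5 2) = 1 ∧
    ∀ n : ℕ, 3 ≤ n → keelComp5 n = ⊥ := by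
  refine ⟨?_, ?_, ?_, Keel5Aux.compN⟩
  · rw [Keel5Aux.comp0]
    exact finrank_span_singleton Keel5Aux.one_ne
  · rw [Keel5Aux.comp1, finrank_span_eq_card Keel5Aux.linind]
    exact ZMod.card 5
  · rw [Keel5Aux.comp2]
    exact finrank_span_singleton Keel5Aux.s_ne
end
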